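/- For every quasi-choice correspondence c over a finite set, lib(c) ≤ 2^{dem(c) − 1}: given a democratic representation V of c, the family of ballots w_U indexed by subfamilies U ⊆ V with |U| > |V|/2, where w_U(A) = ⋂_{u∈U} u(A), is a liberal representation of c, and the number of such subfamilies is at most 2^{|V|−1}. -/

import Mathlib

/-- `r` rationalizes the quasi-choice `c`: `c A` is the set of `r`-maximal elements of `A`. -/
def Rationalizes {X : Type*} (r : X → X → Prop) (c : Set X → Set X) : Prop :=
  ∀ A : Set X, c A = {a ∈ A | ∀ b ∈ A, ¬ r b a}

/-- `c` is freely rationalizable (a ballot): rationalized by an arbitrary binary relation. -/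
def FreelyRat {X : Type*} (c : Set X → Set X) : Prop :=
  ∃ r : X → X → Prop, Rationalizes r c

/-- `c` is asymmetrically rationalizable. -/
def AsymRat {X : Type*} (c : Set X → Set X) : Prop :=
  ∃ r : X → X → Prop, (∀ a b, r a b → ¬ r b a) ∧ Rationalizes r c

/-- Contractiveness: `c` is a quasi-choice. -/
def IsQuasiChoice {X : Type*} (c : Set X → Set X) : Prop :=
  ∀ A : Set X, c A ⊆ A

/-- Axiom α (Chernoff, Standard Contraction Consistency). -/
def AxiomAlpha {X : Type*} (c : Set X → Set X) : Prop :=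
  ∀ ⦃A B : Set X⦄ ⦃x : X⦄, A ⊆ B → x ∈ A → x ∈ c B → x ∈ c A

/-- Axiom γ (Standard Expansion Consistency). -/
def AxiomGamma {X : Type*} (c : Set X → Set X) : Prop :=
  ∀ ⦃A B : Set X⦄ ⦃x : X⦄, x ∈ c A → x ∈ c B → x ∈ c (A ∪ B)

/-- A liberal representation of `c` by the family of ballots `v`. -/
def IsLiberalRep {X : Type*} (c : Set X → Set X) {k : ℕ} (v : Fin k → Set X → Set X) : Prop :=
  (∀ i, FreelyRat (v i)) ∧
    ∀ A : Set X, ∀ x ∈ A, (x ∈ c A ↔ ∃ i, x ∈ v i A)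

/-- A democratic representation of `c` by the family of ballots `v`:
an item is chosen iff more than half of the ballots endorse it. -/
def IsDemRep {X : Type*} (c : Set X → Set X) {k : ℕ} (v : Fin k → Set X → Set X) : Prop :=
  (∀ i, FreelyRat (v i)) ∧
    ∀ A : Set X, ∀ x ∈ A, (x ∈ c A ↔ 2 * Nat.card {i : Fin k // x ∈ v i A} > k)

/-- The liberal number of `c`: the minimum size of a liberal representation (⊤ if none). -/
noncomputable def lib {X : Type*} (c : Set X → Set X) : ℕ∞ :=
  sInf {n : ℕ∞ | ∃ (k : ℕ) (v : Fin k → Set X → Set X), 0 < k ∧ IsLiberalRep c v ∧ n = (k : ℕ∞)}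

/-- The democratic number of `c`: the minimum size of a democratic representation (⊤ if none). -/
noncomputable def dem {X : Type*} (c : Set X → Set X) : ℕ∞ :=
  sInf {n : ℕ∞ | ∃ (k : ℕ) (v : Fin k → Set X → Set X), 0 < k ∧ IsDemRep c v ∧ n = (k : ℕ∞)}

/-- `c` is `s`-majoritarian: some finite family of ballots selects exactly the items
endorsed by a share of ballots strictly larger than `s`. -/
def Majoritarian {X : Type*} (s : ℝ) (c : Set X → Set X) : Prop :=
  ∃ (k : ℕ) (v : Fin k → Set X → Set X), 0 < k ∧ (∀ i, FreelyRat (v i)) ∧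
    ∀ A : Set X, ∀ x ∈ A,
      (x ∈ c A ↔ (Nat.card {i : Fin k // x ∈ v i A} : ℝ) / (k : ℝ) > s)

theorem stmt13 {X : Type*} [Fintype X] (c : Set X → Set X) (hq : IsQuasiChoice c) :
    ∀ m : ℕ, dem c = (m : ℕ∞) → lib c ≤ ((2 ^ (m - 1) : ℕ) : ℕ∞) := by
  classical
  intro m hm
  -- dem c is attained
  set S : Set ℕ∞ := {n : ℕ∞ | ∃ (k : ℕ) (v : Fin k → Set X → Set X),
      0 < k ∧ IsDemRep c v ∧ n = (k : ℕ∞)} with hS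
  have hSne : S.Nonempty := by
    by_contra h
    rw [Set.not_nonempty_iff_eq_empty] at h
    have : dem c = ⊤ := by rw [dem, ← hS, h, sInf_empty]
    rw [hm] at this; exact (ENat.coe_ne_top m) this
  have hmem : (m : ℕ∞) ∈ S := by
    have hmin := WellFounded.min_mem (wellFounded_lt : WellFounded ((· < ·) : ℕ∞ → ℕ∞ → Prop)) S hSne
    have heq : sInf S = WellFounded.min (wellFounded_lt : WellFounded ((· < ·) : ℕ∞ → ℕ∞ → Prop)) S hSne := by
      apply le_antisymm (sInf_le hmin)
      apply le_sInf
      intro b hb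
      exact not_lt.mp (WellFounded.not_lt_min (wellFounded_lt : WellFounded ((· < ·) : ℕ∞ → ℕ∞ → Prop)) S hb)
    rw [← hm]; rw [dem, ← hS] at *; rw [heq]; exact hmin
  obtain ⟨k, v, hk, hdem, hkm⟩ := hmem
  have hkm' : k = m := by exact_mod_cast hkm.symm
  subst hkm'
  -- choose rationalizing relations
  choose r hr using hdem.1
  -- the family of big coalitions
  set T : Finset (Finset (Fin k)) := Finset.univ.filter (fun U => 2 * U.card > k) with hT
  have hTmem : ∀ U : Finset (Fin k), U ∈ T ↔ 2 * U.card > k := by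
    intro U; simp [hT]
  set n : ℕ := T.card with hn
  have hnpos : 0 < n := by
    rw [hn, Finset.card_pos]
    exact ⟨Finset.univ, (hTmem _).mpr (by simpa using by omega)⟩
  -- the ballots
  set e : Fin n ≃ T := T.equivFin.symm with he
  set R : Fin n → X → X → Prop := fun j b a => ∃ i ∈ (e j : Finset (Fin k)), r i b a with hR
  set w : Fin n → Set X → Set X := fun j A => {a ∈ A | ∀ b ∈ A, ¬ R j b a} with hw
  have hwv : ∀ j A x, x ∈ w j A ↔ x ∈ A ∧ ∀ i ∈ (e j : Finset (Fin k)), x ∈ v i A := by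
    intro j A x
    simp only [hw, Set.mem_setOf_eq, hR]
    constructor
    · rintro ⟨hxA, hb⟩
      refine ⟨hxA, fun i hi => ?_⟩
      rw [hr i A]
      exact ⟨hxA, fun b hbA hrb => hb b hbA ⟨i, hi, hrb⟩⟩
    · rintro ⟨hxA, hi⟩
      refine ⟨hxA, fun b hbA ⟨i, hiU, hrb⟩ => ?_⟩
      have := hi i hiU
      rw [hr i A] at this
      exact this.2 b hbA hrb
  -- card of voters as finset
  have hcard : ∀ (A : Set X) (x : X),
      Nat.card {i : Fin k // x ∈ v i A} = (Finset.univ.filter (fun i => x ∈ v i A)).card := by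
    intro A x
    rw [Nat.card_eq_fintype_card, Fintype.card_subtype]
  have hlib : IsLiberalRep c w := by
    constructor
    · intro j; exact ⟨R j, fun A => rfl⟩
    · intro A x hxA
      rw [(hdem.2 A x hxA), hcard]
      constructor
      · intro hmaj
        set U : Finset (Fin k) := Finset.univ.filter (fun i => x ∈ v i A) with hU
        have hUT : U ∈ T := (hTmem U).mpr hmaj
        refine ⟨e.symm ⟨U, hUT⟩, ?_⟩
        rw [hwv]
        refine ⟨hxA, fun i hi => ?_⟩
        rw [Equiv.apply_symm_apply] at hi
        exact (Finset.mem_filter.mp hi).2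
      · rintro ⟨j, hj⟩
        rw [hwv] at hj
        have hUT : (e j : Finset (Fin k)) ∈ T := (e j).2
        have h1 : 2 * (e j : Finset (Fin k)).card > k := (hTmem _).mp hUT
        have h2 : (e j : Finset (Fin k)) ⊆ Finset.univ.filter (fun i => x ∈ v i A) := by
          intro i hi
          exact Finset.mem_filter.mpr ⟨Finset.mem_univ i, hj.2 i hi⟩
        have := Finset.card_le_card h2
        omega
  -- counting
  have hcount : n ≤ 2 ^ (k - 1) := by
    have hdisj : Disjoint T (T.image compl) := by
      rw [Finset.disjoint_left]
      intro U hUT hUim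
      obtain ⟨V, hVT, hVU⟩ := Finset.mem_image.mp hUim
      have h1 : 2 * U.card > k := (hTmem U).mp hUT
      have h2 : 2 * V.card > k := (hTmem V).mp hVT
      have h3 : Vᶜ.card = k - V.card := by
        rw [Finset.card_compl]; simp
      have h4 : V.card ≤ k := by
        have := Finset.card_le_card (Finset.subset_univ V); simpa using this
      rw [← hVU, h3] at h1
      omega
    have himcard : (T.image compl).card = T.card := by
      apply Finset.card_image_of_injective
      exact compl_injective
    have htot : (T ∪ T.image compl).card ≤ 2 ^ k := by
      calc (T ∪ T.image compl).card ≤ Finset.univ.card :=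
            Finset.card_le_card (Finset.subset_univ _)
        _ = 2 ^ k := by simp [Fintype.card_finset]
    rw [Finset.card_union_of_disjoint hdisj, himcard] at htot
    have : 2 ^ k = 2 * 2 ^ (k - 1) := by
      rw [← pow_succ']
      congr 1
      omega
    omega
  -- conclude
  calc lib c ≤ (n : ℕ∞) := by
        apply sInf_le
        exact ⟨n, w, hnpos, hlib, rfl⟩
    _ ≤ ((2 ^ (k - 1) : ℕ) : ℕ∞) := by exact_mod_cast hcount
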